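/- For every natural number n ≥ 1, (n + 1/2)^(n-1) = Σ_{j=1}^{n} C(n-1, n-j) · (n - j + 1/2)^(n-j) · j^(j-2), as an identity of rational numbers, where j^(j-2) for j = 1 is interpreted as 1. -/

import Mathlib

open Polynomial Finset

lemma alt_sum_eval (M : ℕ) (p : ℚ[X]) (hp : p.natDegree < M) :
    ∑ k ∈ range (M + 1), (-1 : ℚ) ^ k * (M.choose k : ℚ) * p.eval (k : ℚ) = 0 := by
  induction M generalizing p with
  | zero => exact absurd hp (Nat.not_lt_zero _)
  | succ M ih =>
    set q : ℚ[X] := p.comp (X + 1) - p with hq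
    have hqe : ∀ k : ℚ, q.eval k = p.eval (k + 1) - p.eval k := by
      intro k; simp [hq, eval_comp]
    set g : ℕ → ℚ := fun k => (-1:ℚ)^k * (M.choose k : ℚ) * p.eval (k:ℚ) with hg
    have key : ∑ k ∈ range (M + 2), (-1 : ℚ) ^ k * ((M+1).choose k : ℚ) * p.eval (k : ℚ)
        + ∑ k ∈ range (M + 1), (-1 : ℚ) ^ k * (M.choose k : ℚ) * q.eval (k : ℚ) = 0 := by
      rw [Finset.sum_range_succ' (fun k => (-1:ℚ)^k * ((M+1).choose k : ℚ) * p.eval (k:ℚ)) (M+1)]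
      have hterm : ∀ k ∈ range (M+1),
          ((-1:ℚ)^(k+1) * ((M+1).choose (k+1) : ℚ) * p.eval ((k+1:ℕ):ℚ)
            + (-1:ℚ)^k * (M.choose k : ℚ) * q.eval (k:ℚ))
          = g (k+1) - g k := by
        intro k _
        rw [hqe, Nat.choose_succ_succ, hg]
        push_cast
        ring
      have hsplit : (∑ k ∈ range (M+1), (-1:ℚ)^(k+1) * ((M+1).choose (k+1) : ℚ) * p.eval ((k+1:ℕ):ℚ))
            + ∑ k ∈ range (M+1), (-1:ℚ)^k * (M.choose k : ℚ) * q.eval (k:ℚ)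
          = ∑ k ∈ range (M+1), (g (k+1) - g k) := by
        rw [← Finset.sum_add_distrib]
        exact Finset.sum_congr rfl hterm
      have htel := Finset.sum_range_sub g (M+1)
      have hgtop : g (M+1) = 0 := by simp [hg]
      have hg0 : g 0 = p.eval 0 := by simp [hg]
      push_cast at hsplit ⊢
      rw [add_right_comm, hsplit, htel, hgtop, hg0]
      simp
    -- now handle q
    by_cases hq0 : q = 0
    · rw [hq0] at key
      simpa using key
    · have hdq : q.natDegree < M := by
        rcases Nat.eq_zero_or_pos p.natDegree with h0 | h0
        · exfalso
          obtain ⟨c, rfl⟩ := Polynomial.natDegree_eq_zero.mp h0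
          simp [hq] at hq0
        · have hp0 : p ≠ 0 := fun h => by simp [h] at h0
          have hX1 : (X + 1 : ℚ[X]).natDegree = 1 := by
            simpa using natDegree_X_add_C (1:ℚ)
          have hn : (p.comp (X+1)).natDegree = p.natDegree := by
            rw [natDegree_comp, hX1, mul_one]
          have hlc : (p.comp (X + 1)).leadingCoeff = p.leadingCoeff := by
            rw [leadingCoeff_comp (by rw [hX1]; norm_num)]
            have : (X + 1 : ℚ[X]).leadingCoeff = 1 := by
              have : (X + 1 : ℚ[X]).Monic := by
                simpa using monic_X_add_C (1:ℚ)
              exact this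
            rw [this, one_pow, mul_one]
          have hc0 : p.comp (X+1) ≠ 0 := by
            intro h
            apply hp0
            rw [← leadingCoeff_eq_zero, ← hlc, h, leadingCoeff_zero]
          have hdeg : (p.comp (X+1)).degree = p.degree := by
            rw [degree_eq_natDegree hc0, degree_eq_natDegree hp0, hn]
          have hlt := Polynomial.degree_sub_lt hdeg hc0 hlc
          rw [hdeg] at hlt
          have := Polynomial.natDegree_lt_natDegree hq0 hlt
          omega
      have := ih q hdq
      rw [this, add_zero] at key
      exact key

noncomputable def Pab (m : ℕ) : ℚ[X] :=
  ∑ k ∈ range (m + 1),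
    C ((m.choose k : ℚ) * ((k + 1 : ℕ) : ℚ) ^ (k - 1)) * (X - C (k : ℚ)) ^ (m - k)

lemma Pab_deriv (m : ℕ) : derivative (Pab (m + 1)) = C ((m : ℚ) + 1) * Pab m := by
  rw [Pab, derivative_sum]
  rw [Finset.sum_range_succ]
  have hlast : derivative (C (((m+1).choose (m+1) : ℚ) * ((m+1+1 : ℕ) : ℚ) ^ (m+1-1)) *
      (X - C ((m+1 : ℕ) : ℚ)) ^ (m+1-(m+1))) = 0 := by
    rw [Nat.sub_self, pow_zero, mul_one, derivative_C]
  rw [hlast, add_zero, Pab, Finset.mul_sum]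
  refine Finset.sum_congr rfl fun k hk => ?_
  rw [Finset.mem_range] at hk
  have hk' : k ≤ m := Nat.lt_succ_iff.mp hk
  rw [derivative_C_mul, derivative_pow, derivative_sub, derivative_X, derivative_C, sub_zero,
    mul_one]
  have he : m + 1 - k - 1 = m - k := by omega
  rw [he, ← mul_assoc, ← C_mul, ← mul_assoc, ← C_mul]
  congr 1
  rw [C_inj]
  have hch : ((m+1).choose k : ℚ) * ((m + 1 - k : ℕ) : ℚ) = ((m:ℚ) + 1) * (m.choose k : ℚ) := by
    have h2 : (m.choose k * (m + 1) : ℕ) = ((m+1).choose k * (m + 1 - k) : ℕ) :=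
      Nat.choose_mul_succ_eq m k
    have h3 := congrArg (Nat.cast : ℕ → ℚ) h2
    push_cast at h3
    linarith
  linear_combination hch * ((k + 1 : ℕ) : ℚ) ^ (k - 1)

lemma Pab_eval_neg_one (m : ℕ) : (Pab (m + 1)).eval (-1) = 0 := by
  have halt := alt_sum_eval (m + 1) ((X + 1 : ℚ[X]) ^ m) (by
    have hmono : (X + 1 : ℚ[X]).Monic := by simpa using monic_X_add_C (1:ℚ)
    have : ((X + 1 : ℚ[X]) ^ m).natDegree = m := by
      rw [hmono.natDegree_pow]
      have : (X + 1 : ℚ[X]).natDegree = 1 := by simpa using natDegree_X_add_C (1:ℚ)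
      rw [this, mul_one]
    omega)
  rw [Pab, eval_finset_sum]
  have hterm : ∀ k ∈ range (m + 2),
      eval (-1) (C (((m+1).choose k : ℚ) * ((k + 1 : ℕ) : ℚ) ^ (k - 1)) * (X - C (k : ℚ)) ^ (m + 1 - k))
      = (-1:ℚ)^(m+1) * ((-1:ℚ)^k * (((m+1).choose k : ℚ)) * eval (k : ℚ) ((X + 1 : ℚ[X])^m)) := by
    intro k hk
    rw [Finset.mem_range] at hk
    have hk' : k ≤ m + 1 := by omega
    rw [eval_mul, eval_C, eval_pow, eval_sub, eval_X, eval_C]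
    have h1 : (-1 - (k:ℚ)) = -((k:ℚ) + 1) := by ring
    rw [h1, neg_pow]
    have h2 : ((k+1:ℕ):ℚ) ^ (k-1) * ((k:ℚ)+1) ^ (m+1-k) = ((k:ℚ)+1) ^ m := by
      have hc : ((k+1:ℕ):ℚ) = (k:ℚ) + 1 := by push_cast; ring
      rw [hc, ← pow_add]
      rcases Nat.eq_zero_or_pos k with rfl | hkpos
      · norm_num
      · congr 1; omega
    have hs : (-1:ℚ)^(m+1-k) * (-1:ℚ)^k = (-1:ℚ)^(m+1) := by
      rw [← pow_add]; congr 1; omega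
    have hk2 : (-1:ℚ)^k * (-1:ℚ)^k = 1 := by
      rw [← pow_add, ← two_mul, pow_mul]; norm_num
    have h3 : (-1:ℚ)^(m+1-k) = (-1:ℚ)^(m+1) * (-1:ℚ)^k := by
      linear_combination ((-1:ℚ)^k) * hs - ((-1:ℚ)^(m+1-k)) * hk2
    rw [eval_pow, eval_add, eval_X, eval_one]
    linear_combination (((m+1).choose k : ℚ)) * ((-1:ℚ)^(m+1-k)) * h2
      + (((m+1).choose k : ℚ)) * (((k:ℚ)+1)^m) * h3
  rw [Finset.sum_congr rfl hterm, ← Finset.mul_sum, halt, mul_zero]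

lemma Pab_eq (m : ℕ) : Pab m = (X + 1 : ℚ[X]) ^ m := by
  induction m with
  | zero => simp [Pab]
  | succ m ih =>
    have hd : derivative (Pab (m+1) - (X + 1 : ℚ[X]) ^ (m+1)) = 0 := by
      rw [derivative_sub, Pab_deriv, ih, derivative_pow, derivative_add, derivative_X,
        derivative_one, add_zero, mul_one, Nat.add_sub_cancel]
      push_cast
      ring
    have hdeg := Polynomial.natDegree_eq_zero_of_derivative_eq_zero hd
    obtain ⟨c, hc⟩ := Polynomial.natDegree_eq_zero.mp hdeg
    have heval := congrArg (Polynomial.eval (-1 : ℚ)) hc.symm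
    rw [eval_sub, Pab_eval_neg_one, eval_pow, eval_add, eval_X, eval_one, eval_C] at heval
    norm_num at heval
    have hz : Pab (m+1) - (X + 1 : ℚ[X]) ^ (m+1) = 0 := by rw [← hc, ← heval, map_zero]
    linear_combination hz

theorem stmt_3 (n : ℕ) (hn : 1 ≤ n) :
    ((n : ℚ) + 1 / 2) ^ (n - 1) =
      ∑ j ∈ Finset.Icc 1 n,
        ((n - 1).choose (n - j) : ℚ) * (((n - j : ℕ) : ℚ) + 1 / 2) ^ (n - j) *
          (j : ℚ) ^ (j - 2) := by
  have hpe := congrArg (Polynomial.eval ((n:ℚ) - 1/2)) (Pab_eq (n-1))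
  rw [Pab, eval_finset_sum, eval_pow, eval_add, eval_X, eval_one] at hpe
  have hn1 : n - 1 + 1 = n := by omega
  rw [hn1] at hpe
  have hy1 : (n:ℚ) - 1/2 + 1 = (n:ℚ) + 1/2 := by ring
  rw [hy1] at hpe
  rw [← Finset.Ico_add_one_right_eq_Icc, Finset.sum_Ico_eq_sum_range]
  have hr : n + 1 - 1 = n := by omega
  rw [hr, ← hpe]
  refine Finset.sum_congr rfl fun k hk => ?_
  rw [Finset.mem_range] at hk
  rw [eval_mul, eval_C, eval_pow, eval_sub, eval_X, eval_C]
  have e1 : n - (1 + k) = n - 1 - k := by omega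
  have e2 : (n-1).choose (n - 1 - k) = (n-1).choose k := Nat.choose_symm (by omega)
  have e3 : ((n - 1 - k : ℕ) : ℚ) + 1/2 = (n:ℚ) - 1/2 - k := by
    rw [Nat.cast_sub (by omega : k ≤ n - 1), Nat.cast_sub (by omega : 1 ≤ n)]
    push_cast
    ring
  have e4 : (1 + k) - 2 = k - 1 := by omega
  rw [e1, e2, e3, e4]
  have e5 : ((1 + k : ℕ) : ℚ) = ((k+1:ℕ):ℚ) := by push_cast; ring
  rw [e5]
  ring
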